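/- Let F be holomorphic on the open unit disk 𝔻 and let g : [0,1] → ℝ be measurable. Then |F′(0)|² · ∫_𝔻 g(|z|)² dA(z) ≤ ∫_𝔻 g(|z|)² |F′(z)|² dA(z), where both sides are interpreted as (lower Lebesgue) integrals of nonnegative functions with values in [0, ∞]. -/

import Mathlib

open MeasureTheory Metric Set

open scoped ENNReal

-- circle mean value for a holomorphic function, centered at 0
lemma meanvalue_circle {f : ℂ → ℂ} {r : ℝ} (hr : 0 < r)
    (hf : DifferentiableOn ℂ f (closedBall (0:ℂ) r)) :
    ∫ θ in (0:ℝ)..(2*Real.pi), f (circleMap 0 r θ) = (2*Real.pi : ℝ) • f 0 := by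
  have h := hf.circleIntegral_sub_inv_smul (w := 0) (by simpa using hr)
  rw [circleIntegral] at h
  have hne : ∀ θ : ℝ, circleMap 0 r θ ≠ 0 := fun θ => circleMap_ne_center hr.ne'
  have : ∀ θ : ℝ, deriv (circleMap 0 r) θ • (circleMap 0 r θ - 0)⁻¹ • f (circleMap 0 r θ)
      = Complex.I * f (circleMap 0 r θ) := by
    intro θ
    rw [deriv_circleMap, sub_zero, smul_eq_mul, smul_eq_mul]
    field_simp [hne θ]
  rw [intervalIntegral.integral_congr (fun θ _ => this θ)] at h
  rw [intervalIntegral.integral_const_mul] at h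
  have : Complex.I * ∫ θ in (0:ℝ)..(2*Real.pi), f (circleMap 0 r θ)
      = Complex.I * ((2*Real.pi : ℝ) • f 0) := by
    rw [h, smul_eq_mul, Complex.real_smul]; push_cast; ring
  exact mul_left_cancel₀ Complex.I_ne_zero this

-- mean value of deriv F over the circle through z (rotated)
lemma meanvalue {F : ℂ → ℂ} (hF : DifferentiableOn ℂ F (ball (0:ℂ) 1))
    {z : ℂ} (hz : z ∈ ball (0:ℂ) 1) :
    ∫ θ in (0:ℝ)..(2*Real.pi), deriv F (Complex.exp (θ * Complex.I) * z)
      = (2*Real.pi : ℝ) • deriv F 0 := by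
  have hd : DifferentiableOn ℂ (deriv F) (ball (0:ℂ) 1) :=
    ((hF.analyticOnNhd isOpen_ball).deriv).differentiableOn
  rcases eq_or_ne z 0 with rfl | hz0
  · simp [intervalIntegral.integral_const]
  · set r : ℝ := ‖z‖ with hr_def
    have hr : 0 < r := by simpa [hr_def] using hz0
    have hrC : (r : ℂ) ≠ 0 := Complex.ofReal_ne_zero.mpr hr.ne'
    have hr1 : r < 1 := by simpa [hr_def, Complex.dist_eq] using hz
    have hmaps : ∀ w ∈ closedBall (0:ℂ) r, (z / (r:ℂ)) * w ∈ ball (0:ℂ) 1 := by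
      intro w hw
      simp only [mem_closedBall, Complex.dist_eq, sub_zero] at hw
      rw [mem_ball, dist_zero_right, norm_mul, norm_div, Complex.norm_real, Real.norm_eq_abs,
        abs_of_pos hr, ← hr_def, div_self hr.ne']
      simpa using lt_of_le_of_lt hw hr1
    have hdiff : DifferentiableOn ℂ (fun w => deriv F ((z / (r:ℂ)) * w)) (closedBall (0:ℂ) r) := by
      refine hd.comp ?_ hmaps
      exact (differentiable_id.const_mul _).differentiableOn
    have h := meanvalue_circle hr hdiff
    simp only [mul_zero] at h
    rw [← h]
    refine intervalIntegral.integral_congr fun θ _ => ?_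
    rw [circleMap_zero]
    congr 1
    field_simp

lemma stepC {F : ℂ → ℂ} (hF : DifferentiableOn ℂ F (ball (0:ℂ) 1))
    {z : ℂ} (hz : z ∈ ball (0:ℂ) 1) :
    ENNReal.ofReal (2*Real.pi) * ENNReal.ofReal (‖deriv F 0‖^2)
      ≤ ∫⁻ θ in Ioc (0:ℝ) (2*Real.pi),
          ENNReal.ofReal (‖deriv F (Complex.exp (θ * Complex.I) * z)‖^2) := by
  have hd : DifferentiableOn ℂ (deriv F) (ball (0:ℂ) 1) :=
    ((hF.analyticOnNhd isOpen_ball).deriv).differentiableOn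
  set f : ℝ → ℝ := fun θ => ‖deriv F (Complex.exp (θ * Complex.I) * z)‖ with hf_def
  have hmem : ∀ θ : ℝ, Complex.exp (θ * Complex.I) * z ∈ ball (0:ℂ) 1 := by
    intro θ
    simp only [mem_ball, Complex.dist_eq, sub_zero, norm_mul, Complex.norm_exp_ofReal_mul_I, one_mul]
    simpa [Complex.dist_eq] using hz
  have hfc : Continuous f := by
    have : Continuous fun θ : ℝ => Complex.exp (θ * Complex.I) * z := by continuity
    exact continuous_norm.comp
      (hd.continuousOn.comp_continuous this hmem)
  set a : ℝ := ‖deriv F 0‖ with ha_def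
  have hπ : (0:ℝ) ≤ 2 * Real.pi := by positivity
  have h1 : 2 * Real.pi * a ≤ ∫ θ in Ioc (0:ℝ) (2*Real.pi), f θ := by
    have hmv := meanvalue hF hz
    have hnorm : ‖∫ θ in (0:ℝ)..(2*Real.pi), deriv F (Complex.exp (θ * Complex.I) * z)‖
        = 2 * Real.pi * a := by
      rw [hmv, norm_smul, Real.norm_eq_abs, abs_of_nonneg hπ, ha_def]
    rw [← hnorm, ← intervalIntegral.integral_of_le hπ]
    have := intervalIntegral.norm_integral_le_integral_norm
      (f := fun θ : ℝ => deriv F (Complex.exp (θ * Complex.I) * z)) (μ := volume) hπ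
    exact this
  have hfi : IntegrableOn f (Ioc (0:ℝ) (2*Real.pi)) := hfc.integrableOn_Ioc
  have h2 : ENNReal.ofReal (2 * Real.pi * a)
      ≤ ∫⁻ θ in Ioc (0:ℝ) (2*Real.pi), ENNReal.ofReal (f θ) := by
    rw [← ofReal_integral_eq_lintegral_ofReal hfi
      (Filter.Eventually.of_forall fun θ => show (0:ℝ) ≤ f θ from norm_nonneg _)]
    exact ENNReal.ofReal_le_ofReal h1
  -- Cauchy-Schwarz
  set μ := volume.restrict (Ioc (0:ℝ) (2*Real.pi)) with hμ_def
  set S : ℝ≥0∞ := ∫⁻ θ, ENNReal.ofReal ((f θ)^2) ∂μ with hS_def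
  have hSrpow : (∫⁻ θ, ENNReal.ofReal (f θ) ^ (2:ℝ) ∂μ) = S := by
    refine lintegral_congr fun θ => ?_
    rw [ENNReal.ofReal_pow (show 0 ≤ f θ from norm_nonneg _),
      show (2:ℝ) = ((2:ℕ):ℝ) by norm_num, ENNReal.rpow_natCast]
  have hμuniv : μ univ = ENNReal.ofReal (2*Real.pi) := by
    rw [hμ_def, Measure.restrict_apply_univ, Real.volume_Ioc, sub_zero]
  have hCS : (∫⁻ θ, ENNReal.ofReal (f θ) ∂μ)
      ≤ S ^ (1/2 : ℝ) * ENNReal.ofReal (2*Real.pi) ^ (1/2 : ℝ) := by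
    have hpq : Real.HolderConjugate 2 2 := Real.HolderConjugate.two_two
    have := ENNReal.lintegral_mul_le_Lp_mul_Lq μ hpq
      (f := fun θ => ENNReal.ofReal (f θ)) (g := fun _ => 1)
      ((ENNReal.continuous_ofReal.comp hfc).measurable).aemeasurable
      aemeasurable_const
    simp only [Pi.mul_apply, mul_one, ENNReal.one_rpow, lintegral_const, hμuniv] at this
    rwa [hSrpow, one_mul] at this
  -- combine
  set c : ℝ≥0∞ := ENNReal.ofReal (2*Real.pi) with hc_def
  have hc0 : c ≠ 0 := by
    simp [hc_def, ENNReal.ofReal_eq_zero, not_le, Real.pi_pos]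
  have hctop : c ≠ ⊤ := ENNReal.ofReal_ne_top
  have hsq : (ENNReal.ofReal (2 * Real.pi * a)) ^ 2 ≤ (S ^ (1/2:ℝ) * c ^ (1/2:ℝ)) ^ 2 :=
    pow_le_pow_left₀ zero_le (le_trans (le_trans (le_refl _) h2) hCS) 2
  have hRHSsq : (S ^ (1/2:ℝ) * c ^ (1/2:ℝ)) ^ 2 = S * c := by
    rw [mul_pow, ← ENNReal.rpow_natCast (S ^ (1/2:ℝ)) 2, ← ENNReal.rpow_natCast (c ^ (1/2:ℝ)) 2,
      ← ENNReal.rpow_mul, ← ENNReal.rpow_mul]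
    norm_num
  have hLHSsq : (ENNReal.ofReal (2 * Real.pi * a)) ^ 2 = c * (c * ENNReal.ofReal (a^2)) := by
    rw [ENNReal.ofReal_mul hπ, mul_pow, hc_def, ENNReal.ofReal_pow (show 0 ≤ a from norm_nonneg _), sq]
    ring
  have : c * (c * ENNReal.ofReal (a^2)) ≤ S * c := by
    rw [← hLHSsq, ← hRHSsq]; exact hsq
  have hfin : c * ENNReal.ofReal (a^2) ≤ S := by
    rw [mul_comm] at this
    exact (ENNReal.mul_le_mul_iff_left hc0 hctop).mp this
  exact hfin

lemma stepA (cz h : ℂ → ℝ≥0∞) (hcz : ∀ w v : ℂ, ‖w‖ = ‖v‖ → cz w = cz v)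
    (θ : ℝ) :
    ∫⁻ z in ball (0:ℂ) 1, cz z * h (Complex.exp (θ * Complex.I) * z)
      = ∫⁻ z in ball (0:ℂ) 1, cz z * h z := by
  set u : Circle := Circle.exp θ with hu
  have hcoe : (u : ℂ) = Complex.exp (θ * Complex.I) := Circle.coe_exp θ
  have habs : ‖(u : ℂ)‖ = 1 := Circle.norm_coe u
  set e : ℂ ≃ₗᵢ[ℝ] ℂ := rotation u with he
  have hmp : MeasurePreserving e volume volume := e.measurePreserving
  have hemb : MeasurableEmbedding e := e.toHomeomorph.measurableEmbedding
  have hpre : e ⁻¹' (ball (0:ℂ) 1) = ball (0:ℂ) 1 := by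
    ext w
    simp only [mem_preimage, he, rotation_apply, mem_ball, Complex.dist_eq, sub_zero,
      norm_mul, habs, one_mul]
  have key := hmp.setLIntegral_comp_preimage_emb hemb (fun w => cz w * h w) (ball (0:ℂ) 1)
  rw [hpre] at key
  rw [← key]
  refine lintegral_congr fun w => ?_
  have h1 : e w = Complex.exp (θ * Complex.I) * w := by rw [he, rotation_apply, hcoe]
  have h2 : cz (e w) = cz w := by
    apply hcz
    rw [h1, norm_mul]
    simp [Complex.norm_exp_ofReal_mul_I]
  rw [h1] at h2 ⊢
  rw [h2]

/-- For `F` holomorphic on the unit disk and `g` measurable,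
`|F′(0)|² ∫_𝔻 g(|z|)² dA ≤ ∫_𝔻 g(|z|)² |F′(z)|² dA`, as lower Lebesgue
integrals with values in `[0,∞]`. -/
theorem derivative_at_center_bound
    (F : ℂ → ℂ) (hF : DifferentiableOn ℂ F (ball (0:ℂ) 1))
    (g : ℝ → ℝ) (hg : Measurable g) :
    ENNReal.ofReal (‖deriv F 0‖^2) *
        (∫⁻ z in ball (0:ℂ) 1, ENNReal.ofReal ((g ‖z‖)^2))
      ≤ ∫⁻ z in ball (0:ℂ) 1,
          ENNReal.ofReal ((g ‖z‖)^2 * ‖deriv F z‖^2) := by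
  set cz : ℂ → ℝ≥0∞ := fun z => ENNReal.ofReal ((g ‖z‖)^2) with hcz_def
  set h : ℂ → ℝ≥0∞ := fun z => ENNReal.ofReal (‖deriv F z‖^2) with hh_def
  set A : ℝ≥0∞ := ENNReal.ofReal (‖deriv F 0‖^2) with hA_def
  set c2π : ℝ≥0∞ := ENNReal.ofReal (2*Real.pi) with hc_def
  have hc0 : c2π ≠ 0 := by
    simp [hc_def, ENNReal.ofReal_eq_zero, not_le, Real.pi_pos]
  have hctop : c2π ≠ ⊤ := ENNReal.ofReal_ne_top
  have hRHS : (∫⁻ z in ball (0:ℂ) 1,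
        ENNReal.ofReal ((g ‖z‖)^2 * ‖deriv F z‖^2))
      = ∫⁻ z in ball (0:ℂ) 1, cz z * h z :=
    lintegral_congr fun z => ENNReal.ofReal_mul (sq_nonneg _)
  rw [hRHS]
  set I₀ : ℝ≥0∞ := ∫⁻ z in ball (0:ℂ) 1, cz z with hI0
  set I₁ : ℝ≥0∞ := ∫⁻ z in ball (0:ℂ) 1, cz z * h z with hI1
  have hczinv : ∀ w v : ℂ, ‖w‖ = ‖v‖ → cz w = cz v := by
    intro w v hwv; simp [hcz_def, hwv]
  -- measurability for Tonelli
  have m_cz : Measurable cz :=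
    ENNReal.measurable_ofReal.comp ((hg.comp continuous_norm.measurable).pow_const 2)
  have m_h : Measurable h :=
    ENNReal.measurable_ofReal.comp
      ((continuous_norm.measurable.comp (measurable_deriv F)).pow_const 2)
  have m_map : Measurable (fun p : ℝ × ℂ => Complex.exp ((p.1 : ℂ) * Complex.I) * p.2) :=
    (by continuity : Continuous fun p : ℝ × ℂ => Complex.exp ((p.1 : ℂ) * Complex.I) * p.2).measurable
  have hm : Measurable (Function.uncurry fun (θ : ℝ) (z : ℂ) =>
      cz z * h (Complex.exp ((θ : ℂ) * Complex.I) * z)) := by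
    have : (Function.uncurry fun (θ : ℝ) (z : ℂ) =>
        cz z * h (Complex.exp ((θ : ℂ) * Complex.I) * z))
        = fun p : ℝ × ℂ => cz p.2 * h (Complex.exp ((p.1 : ℂ) * Complex.I) * p.2) := rfl
    rw [this]
    exact (m_cz.comp measurable_snd).mul (m_h.comp m_map)
  have hK : c2π * A ≠ ⊤ := ENNReal.mul_ne_top hctop ENNReal.ofReal_ne_top
  have key : c2π * (A * I₀) ≤ c2π * I₁ := by
    calc c2π * (A * I₀)
        = ∫⁻ z in ball (0:ℂ) 1, cz z * (c2π * A) := by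
          rw [lintegral_mul_const' _ _ hK]; ring
      _ ≤ ∫⁻ z in ball (0:ℂ) 1, cz z *
            ∫⁻ θ in Ioc (0:ℝ) (2*Real.pi), h (Complex.exp ((θ:ℂ) * Complex.I) * z) := by
          refine lintegral_mono_ae ?_
          filter_upwards [self_mem_ae_restrict measurableSet_ball] with z hz
          exact mul_le_mul_right (stepC hF hz) _
      _ = ∫⁻ z in ball (0:ℂ) 1, ∫⁻ θ in Ioc (0:ℝ) (2*Real.pi),
            cz z * h (Complex.exp ((θ:ℂ) * Complex.I) * z) :=
          lintegral_congr fun z => (lintegral_const_mul' _ _ ENNReal.ofReal_ne_top).symm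
      _ = ∫⁻ θ in Ioc (0:ℝ) (2*Real.pi), ∫⁻ z in ball (0:ℂ) 1,
            cz z * h (Complex.exp ((θ:ℂ) * Complex.I) * z) :=
          (lintegral_lintegral_swap hm.aemeasurable).symm
      _ = ∫⁻ _θ in Ioc (0:ℝ) (2*Real.pi), I₁ :=
          lintegral_congr fun θ => stepA cz h hczinv θ
      _ = c2π * I₁ := by
          rw [setLIntegral_const, Real.volume_Ioc, sub_zero, mul_comm]
  exact (ENNReal.mul_le_mul_iff_right hc0 hctop).mp key
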